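/- Let Q, P ⊆ ℝ^d be finite, disjoint, nonempty sets, m = |Q ∪ P|, ε = m⁻³, and let X be the constructed labeled data set. Suppose there are unit vectors h₁, h₂ ∈ ℝ^d and o₁, o₂ ∈ ℝ such that: (i) h₁·q + o₁ > 0 > h₂·q + o₂ for all q ∈ Q; (ii) for every p ∈ P, the numbers h₁·p + o₁ and h₂·p + o₂ are either both positive or both negative; and (iii) |h_i·x + o_i| > ε for all x ∈ Q ∪ P and i ∈ {1,2}. Let β = 4/ε and define φ : ℝ^d → ℝ by φ(x) = max(0, β(h₁·x+o₁)) − max(0, β(h₁·x+o₁) − 1) − max(0, β(h₂·x+o₂)) + max(0, β(h₂·x+o₂) − 1). Then φ fits X exactly: φ(q) = 1 for all q ∈ Q, φ(p) = 0 for all p ∈ P, φ(r_{qp}) = 1 and φ(s_{qp}) = 0 for all (q,p) ∈ Q×P. In particular, X is exactly fittable by a two-layer network with 4 ReLU neurons. -/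

import Mathlib

open scoped RealInnerProductSpace Classical

/-- The interpolation parameter `δ_{qp} = ε / (2‖q − p‖)`. -/
noncomputable def dqp {d : ℕ} (ε : ℝ) (q p : EuclideanSpace ℝ (Fin d)) : ℝ :=
  ε / (2 * ‖q - p‖)

/-- The auxiliary point `r_{qp} = (1 − δ_{qp})·q + δ_{qp}·p`. -/
noncomputable def rqp {d : ℕ} (ε : ℝ) (q p : EuclideanSpace ℝ (Fin d)) :
    EuclideanSpace ℝ (Fin d) :=
  (1 - dqp ε q p) • q + dqp ε q p • p

/-- The auxiliary point `s_{qp} = δ_{qp}·q + (1 − δ_{qp})·p`. -/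
noncomputable def sqp {d : ℕ} (ε : ℝ) (q p : EuclideanSpace ℝ (Fin d)) :
    EuclideanSpace ℝ (Fin d) :=
  dqp ε q p • q + (1 - dqp ε q p) • p

/-- The labeled data set `X`: `(q,1)` for `q ∈ Q`, `(p,0)` for `p ∈ P`, and `(r_{qp},1)`,
`(s_{qp},0)` for `(q,p) ∈ Q × P`. -/
noncomputable def dataX {d : ℕ} (Q P : Finset (EuclideanSpace ℝ (Fin d))) (ε : ℝ) :
    Set (EuclideanSpace ℝ (Fin d) × ℝ) :=
  {z | (∃ q ∈ Q, z = (q, 1)) ∨ (∃ p ∈ P, z = (p, 0)) ∨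
    (∃ q ∈ Q, ∃ p ∈ P, z = (rqp ε q p, 1) ∨ z = (sqp ε q p, 0))}

lemma step_one {t : ℝ} (h : 1 ≤ t) : max 0 t - max 0 (t - 1) = 1 := by
  rw [max_eq_right (by linarith), max_eq_right (by linarith)]; ring

lemma step_zero {t : ℝ} (h : t ≤ 0) : max 0 t - max 0 (t - 1) = 0 := by
  rw [max_eq_left h, max_eq_left (by linarith)]; ring

/-- If two hyperplanes strictly separate `Q` and `P` (with margin `ε`), then the explicit
four-ReLU network `φ` fits the constructed data set `X` exactly. -/
theorem four_relus_fit_dataX (d : ℕ) (Q P : Finset (EuclideanSpace ℝ (Fin d)))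
    (hQ : Q.Nonempty) (hP : P.Nonempty) (hdisj : Disjoint Q P)
    (m : ℕ) (hm : m = (Q ∪ P).card) (ε : ℝ) (hε : ε = ((m : ℝ) ^ 3)⁻¹)
    (h₁ h₂ : EuclideanSpace ℝ (Fin d)) (hh₁ : ‖h₁‖ = 1) (hh₂ : ‖h₂‖ = 1) (o₁ o₂ : ℝ)
    (hQsep : ∀ q ∈ Q, 0 < ⟪h₁, q⟫ + o₁ ∧ ⟪h₂, q⟫ + o₂ < 0)
    (hPsep : ∀ p ∈ P, (0 < ⟪h₁, p⟫ + o₁ ∧ 0 < ⟪h₂, p⟫ + o₂) ∨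
      (⟪h₁, p⟫ + o₁ < 0 ∧ ⟪h₂, p⟫ + o₂ < 0))
    (hmargin : ∀ x ∈ Q ∪ P, ε < |⟪h₁, x⟫ + o₁| ∧ ε < |⟪h₂, x⟫ + o₂|)
    (β : ℝ) (hβ : β = 4 / ε)
    (φ : EuclideanSpace ℝ (Fin d) → ℝ)
    (hφ : ∀ x, φ x =
      max 0 (β * (⟪h₁, x⟫ + o₁)) - max 0 (β * (⟪h₁, x⟫ + o₁) - 1)
        - max 0 (β * (⟪h₂, x⟫ + o₂)) + max 0 (β * (⟪h₂, x⟫ + o₂) - 1)) :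
    (∀ q ∈ Q, φ q = 1) ∧ (∀ p ∈ P, φ p = 0) ∧
    (∀ q ∈ Q, ∀ p ∈ P, φ (rqp ε q p) = 1 ∧ φ (sqp ε q p) = 0) ∧
    (∀ z ∈ dataX Q P ε, φ z.1 = z.2) := by
  have hmpos : 0 < m := by
    rw [hm]
    exact Finset.card_pos.mpr ⟨hQ.choose, Finset.mem_union_left _ hQ.choose_spec⟩
  have hεpos : 0 < ε := by
    rw [hε]; positivity
  have hβε : β * ε = 4 := by rw [hβ]; field_simp
  have hβpos : 0 < β := by rw [hβ]; positivity
  -- evaluation lemmas for φ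
  have eval1 : ∀ x, ε / 2 ≤ ⟪h₁, x⟫ + o₁ → ⟪h₂, x⟫ + o₂ ≤ 0 → φ x = 1 := by
    intro x ha hc
    have h1 : 1 ≤ β * (⟪h₁, x⟫ + o₁) := by nlinarith
    have h2 : β * (⟪h₂, x⟫ + o₂) ≤ 0 := by nlinarith
    rw [hφ]
    have e1 := step_one h1
    have e2 := step_zero h2
    linarith
  have eval0p : ∀ x, ε / 2 ≤ ⟪h₁, x⟫ + o₁ → ε / 2 ≤ ⟪h₂, x⟫ + o₂ → φ x = 0 := by
    intro x ha hc
    have h1 : 1 ≤ β * (⟪h₁, x⟫ + o₁) := by nlinarith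
    have h2 : 1 ≤ β * (⟪h₂, x⟫ + o₂) := by nlinarith
    rw [hφ]
    have e1 := step_one h1
    have e2 := step_one h2
    linarith
  have eval0n : ∀ x, ⟪h₁, x⟫ + o₁ ≤ 0 → ⟪h₂, x⟫ + o₂ ≤ 0 → φ x = 0 := by
    intro x ha hc
    have h1 : β * (⟪h₁, x⟫ + o₁) ≤ 0 := by nlinarith
    have h2 : β * (⟪h₂, x⟫ + o₂) ≤ 0 := by nlinarith
    rw [hφ]
    have e1 := step_zero h1
    have e2 := step_zero h2
    linarith
  -- margin facts
  have hQm : ∀ q ∈ Q, ε < ⟪h₁, q⟫ + o₁ ∧ ⟪h₂, q⟫ + o₂ < -ε := by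
    intro q hq
    obtain ⟨m1, m2⟩ := hmargin q (Finset.mem_union_left _ hq)
    obtain ⟨s1, s2⟩ := hQsep q hq
    rw [abs_of_pos s1] at m1
    rw [abs_of_neg s2] at m2
    exact ⟨m1, by linarith⟩
  have hPm : ∀ p ∈ P, (ε < ⟪h₁, p⟫ + o₁ ∧ ε < ⟪h₂, p⟫ + o₂) ∨
      (⟪h₁, p⟫ + o₁ < -ε ∧ ⟪h₂, p⟫ + o₂ < -ε) := by
    intro p hp
    obtain ⟨m1, m2⟩ := hmargin p (Finset.mem_union_right _ hp)
    rcases hPsep p hp with ⟨s1, s2⟩ | ⟨s1, s2⟩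
    · left; rw [abs_of_pos s1] at m1; rw [abs_of_pos s2] at m2; exact ⟨m1, m2⟩
    · right; rw [abs_of_neg s1] at m1; rw [abs_of_neg s2] at m2
      constructor <;> linarith
  -- inner product perturbation bounds
  have key : ∀ (h : EuclideanSpace ℝ (Fin d)), ‖h‖ = 1 → ∀ q ∈ Q, ∀ p ∈ P,
      |⟪h, rqp ε q p⟫ - ⟪h, q⟫| ≤ ε / 2 ∧ |⟪h, sqp ε q p⟫ - ⟪h, p⟫| ≤ ε / 2 := by
    intro h hh q hq p hp
    have hne : q ≠ p := by
      intro e; exact (Finset.disjoint_left.mp hdisj hq) (e ▸ hp)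
    have hnorm : 0 < ‖q - p‖ := by
      rw [norm_pos_iff]; exact sub_ne_zero.mpr hne
    set δ := dqp ε q p with hδdef
    have hδpos : 0 < δ := by
      rw [hδdef, dqp]; positivity
    have hδn : δ * ‖q - p‖ = ε / 2 := by
      rw [hδdef, dqp]; field_simp
    have hr : ⟪h, rqp ε q p⟫ - ⟪h, q⟫ = δ * ⟪h, p - q⟫ := by
      rw [rqp, inner_add_right, real_inner_smul_right, real_inner_smul_right, inner_sub_right]
      ring
    have hs : ⟪h, sqp ε q p⟫ - ⟪h, p⟫ = δ * ⟪h, q - p⟫ := by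
      rw [sqp, inner_add_right, real_inner_smul_right, real_inner_smul_right, inner_sub_right]
      ring
    have hb1 : |⟪h, p - q⟫| ≤ ‖q - p‖ := by
      calc |⟪h, p - q⟫| ≤ ‖h‖ * ‖p - q‖ := abs_real_inner_le_norm h (p - q)
        _ = ‖q - p‖ := by rw [hh, one_mul, norm_sub_rev]
    have hb2 : |⟪h, q - p⟫| ≤ ‖q - p‖ := by
      calc |⟪h, q - p⟫| ≤ ‖h‖ * ‖q - p‖ := abs_real_inner_le_norm h (q - p)
        _ = ‖q - p‖ := by rw [hh, one_mul]
    constructor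
    · rw [hr, abs_mul, abs_of_pos hδpos]
      nlinarith
    · rw [hs, abs_mul, abs_of_pos hδpos]
      nlinarith
  -- main parts
  have partQ : ∀ q ∈ Q, φ q = 1 := by
    intro q hq
    obtain ⟨m1, m2⟩ := hQm q hq
    exact eval1 q (by linarith) (by linarith)
  have partP : ∀ p ∈ P, φ p = 0 := by
    intro p hp
    rcases hPm p hp with ⟨m1, m2⟩ | ⟨m1, m2⟩
    · exact eval0p p (by linarith) (by linarith)
    · exact eval0n p (by linarith) (by linarith)
  have partRS : ∀ q ∈ Q, ∀ p ∈ P, φ (rqp ε q p) = 1 ∧ φ (sqp ε q p) = 0 := by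
    intro q hq p hp
    obtain ⟨k1r, k1s⟩ := key h₁ hh₁ q hq p hp
    obtain ⟨k2r, k2s⟩ := key h₂ hh₂ q hq p hp
    rw [abs_le] at k1r k1s k2r k2s
    obtain ⟨m1, m2⟩ := hQm q hq
    constructor
    · exact eval1 _ (by linarith [k1r.1]) (by linarith [k2r.2])
    · rcases hPm p hp with ⟨n1, n2⟩ | ⟨n1, n2⟩
      · exact eval0p _ (by linarith [k1s.1]) (by linarith [k2s.1])
      · exact eval0n _ (by linarith [k1s.2]) (by linarith [k2s.2])
  refine ⟨partQ, partP, partRS, ?_⟩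
  rintro z hz
  rcases hz with ⟨q, hq, rfl⟩ | ⟨p, hp, rfl⟩ | ⟨q, hq, p, hp, rfl | rfl⟩
  · exact partQ q hq
  · exact partP p hp
  · exact (partRS q hq p hp).1
  · exact (partRS q hq p hp).2
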